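/- Lower bound for Bohr set size: for any Γ ⊆ ℤ/Nℤ and radius γ ∈ (0, 1/2], the Bohr set B(Γ, γ) = {x ∈ ℤ/Nℤ : ‖tx/N‖ ≤ γ for all t ∈ Γ} satisfies |B(Γ, γ)| ≥ γ^{|Γ|}·N, where ‖·‖ denotes distance to the nearest integer. -/

import Mathlib

open Finset

/-- Distance from a real number to the nearest integer. -/
noncomputable def distInt (r : ℝ) : ℝ := |r - round r|

open scoped Classical in
/-- The Bohr set `B(Γ, γ) = {x ∈ ℤ/Nℤ : ‖tx/N‖ ≤ γ for all t ∈ Γ}`. -/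
noncomputable def bohr {N : ℕ} [NeZero N] (Γ : Finset (ZMod N)) (γ : ℝ) : Finset (ZMod N) :=
  Finset.univ.filter fun x => ∀ t ∈ Γ, distInt (((t * x).val : ℝ) / N) ≤ γ

open scoped Classical

-- distance lemma
lemma dist_aux {N : ℕ} [NeZero N] {γ : ℝ} (hγ : γ ≤ 1 / 2) (a b : ZMod N)
    (ha : (a.val : ℝ) < γ * N) (hb : (b.val : ℝ) < γ * N) :
    distInt (((a - b).val : ℝ) / N) ≤ γ := by
  have hN : (0 : ℝ) < N := by exact_mod_cast Nat.pos_of_ne_zero (NeZero.ne N)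
  -- (a-b).val ≡ a.val - b.val mod N
  have hcong : ((N : ℤ)) ∣ (((a - b).val : ℤ) - ((a.val : ℤ) - (b.val : ℤ))) := by
    have : ((((a - b).val : ℤ) - ((a.val : ℤ) - (b.val : ℤ)) : ℤ) : ZMod N) = 0 := by
      push_cast
      simp [ZMod.natCast_val, ZMod.intCast_cast]
    exact (ZMod.intCast_zmod_eq_zero_iff_dvd _ N).1 this
  obtain ⟨q, hq⟩ := hcong
  have hval : (((a - b).val : ℝ)) = ((a.val : ℝ) - (b.val : ℝ)) + N * q := by
    have := congrArg (fun z : ℤ => (z : ℝ)) hq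
    push_cast at this
    linarith
  have h1 : distInt (((a - b).val : ℝ) / N) ≤ |((a - b).val : ℝ) / N - q| := round_le _ q
  calc distInt (((a - b).val : ℝ) / N) ≤ |((a - b).val : ℝ) / N - q| := h1
    _ = |(a.val : ℝ) - (b.val : ℝ)| / N := by
        rw [hval, show ((a.val : ℝ) - b.val + N * q) / N - q = ((a.val : ℝ) - b.val) / N by
          field_simp; ring, abs_div, abs_of_pos hN]
    _ ≤ γ := by
        rw [div_le_iff₀ hN]
        have h0a : (0:ℝ) ≤ a.val := Nat.cast_nonneg _
        have h0b : (0:ℝ) ≤ b.val := Nat.cast_nonneg _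
        rw [abs_le]
        constructor <;> nlinarith

lemma count_aux {N : ℕ} [NeZero N] {γ : ℝ} (hγ0 : 0 < γ) (hγ : γ ≤ 1 / 2) (u : ZMod N) :
    ((Finset.univ.filter fun κ : ZMod N => ((u - κ).val : ℝ) < γ * N).card : ℝ) =
      (⌈γ * N⌉₊ : ℝ) := by
  have hN : 0 < N := Nat.pos_of_ne_zero (NeZero.ne N)
  have hNR : (0:ℝ) < N := by exact_mod_cast hN
  have hmN : ⌈γ * N⌉₊ ≤ N := by
    rw [Nat.ceil_le]
    nlinarith
  -- first bijection: κ ↦ u - κ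
  have h1 : (Finset.univ.filter fun κ : ZMod N => ((u - κ).val : ℝ) < γ * N).card =
      (Finset.univ.filter fun c : ZMod N => ((c.val : ℝ)) < γ * N).card := by
    apply Finset.card_bij (fun κ _ => u - κ)
    · intro κ hκ
      simp only [Finset.mem_filter, Finset.mem_univ, true_and] at hκ ⊢
      exact hκ
    · intro κ₁ h₁ κ₂ h₂ h
      have := congrArg (fun z => u - z) h
      simpa using sub_right_injective h
    · intro c hc
      refine ⟨u - c, ?_, by ring⟩
      simp only [Finset.mem_filter, Finset.mem_univ, true_and] at hc ⊢
      simpa using hc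
  rw [h1]
  -- second: count c with val < ⌈γN⌉
  have h2 : (Finset.univ.filter fun c : ZMod N => ((c.val : ℝ)) < γ * N) =
      (Finset.univ.filter fun c : ZMod N => c.val < ⌈γ * N⌉₊) := by
    apply Finset.filter_congr
    intro c _
    constructor
    · intro h; exact Nat.lt_ceil.2 h
    · intro h; exact Nat.lt_ceil.1 h
  rw [h2]
  norm_cast
  have h3 : (Finset.univ.filter fun c : ZMod N => c.val < ⌈γ * N⌉₊).card =
      (Finset.range ⌈γ * N⌉₊).card := by
    apply Finset.card_bij (fun c _ => c.val)
    · intro c hc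
      simp only [Finset.mem_filter, Finset.mem_univ, true_and] at hc
      simpa using hc
    · intro c₁ h₁ c₂ h₂ h
      exact ZMod.val_injective N h
    · intro j hj
      rw [Finset.mem_range] at hj
      refine ⟨(j : ZMod N), ?_, ?_⟩ <;>
        simp [ZMod.val_natCast_of_lt (lt_of_lt_of_le hj hmN), hj]
  rw [h3, Finset.card_range]

theorem stmt8 {N : ℕ} [NeZero N] (Γ : Finset (ZMod N)) (γ : ℝ) (hγ0 : 0 < γ)
    (hγ : γ ≤ 1 / 2) :
    γ ^ Γ.card * N ≤ ((bohr Γ γ).card : ℝ) := by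
  have hN : 0 < N := Nat.pos_of_ne_zero (NeZero.ne N)
  have hNR : (0:ℝ) < N := by exact_mod_cast hN
  set m := ⌈γ * N⌉₊ with hm
  set d := Γ.card with hd
  have hγNm : γ * N ≤ (m : ℝ) := Nat.le_ceil _
  let S : (↥Γ → ZMod N) → Finset (ZMod N) := fun k =>
    Finset.univ.filter fun x => ∀ t : ↥Γ, (((t : ZMod N) * x - k t).val : ℝ) < γ * N
  have hcard : Fintype.card ↥Γ = d := Fintype.card_coe Γ
  have hsum : ∑ k : ↥Γ → ZMod N, ((S k).card : ℝ) = (N : ℝ) * (m : ℝ) ^ d := by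
    have step1 : ∀ k : ↥Γ → ZMod N, ((S k).card : ℝ) =
        ∑ x : ZMod N, ∏ t : ↥Γ,
          (if (((t : ZMod N) * x - k t).val : ℝ) < γ * N then (1:ℝ) else 0) := by
      intro k
      rw [show ((S k).card : ℝ) = ∑ x : ZMod N,
          (if ∀ t : ↥Γ, (((t : ZMod N) * x - k t).val : ℝ) < γ * N then (1:ℝ) else 0) by
        simp [S, Finset.sum_boole]]
      refine Finset.sum_congr rfl fun x _ => ?_
      rw [Finset.prod_boole]
      simp
    calc ∑ k : ↥Γ → ZMod N, ((S k).card : ℝ)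
        = ∑ k : ↥Γ → ZMod N, ∑ x : ZMod N, ∏ t : ↥Γ,
            (if (((t : ZMod N) * x - k t).val : ℝ) < γ * N then (1:ℝ) else 0) :=
          Finset.sum_congr rfl fun k _ => step1 k
      _ = ∑ x : ZMod N, ∑ k : ↥Γ → ZMod N, ∏ t : ↥Γ,
            (if (((t : ZMod N) * x - k t).val : ℝ) < γ * N then (1:ℝ) else 0) :=
          Finset.sum_comm
      _ = ∑ x : ZMod N, ∏ t : ↥Γ, ∑ κ : ZMod N,
            (if (((t : ZMod N) * x - κ).val : ℝ) < γ * N then (1:ℝ) else 0) := by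
          refine Finset.sum_congr rfl fun x _ => ?_
          rw [← Fintype.piFinset_univ]
          exact Finset.sum_prod_piFinset (ι := ↥Γ) Finset.univ
            (fun t κ => if (((t : ZMod N) * x - κ).val : ℝ) < γ * N then (1:ℝ) else 0)
      _ = ∑ x : ZMod N, ∏ _t : ↥Γ, (m : ℝ) := by
          refine Finset.sum_congr rfl fun x _ => Finset.prod_congr rfl fun t _ => ?_
          rw [Finset.sum_boole]
          exact count_aux hγ0 hγ _
      _ = (N : ℝ) * (m : ℝ) ^ d := by
          simp [Finset.prod_const, hcard, ZMod.card, mul_comm, hd]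
  -- pigeonhole
  have hlb : ∑ k : ↥Γ → ZMod N, (γ ^ d * N) ≤ ∑ k : ↥Γ → ZMod N, ((S k).card : ℝ) := by
    rw [hsum, Finset.sum_const, Finset.card_univ, Fintype.card_fun, ZMod.card, hcard,
      nsmul_eq_mul]
    have h1 : ((N ^ d : ℕ) : ℝ) * (γ ^ d * N) = (γ * N) ^ d * N := by
      push_cast; ring
    rw [h1]
    have h2 : (γ * N) ^ d ≤ (m : ℝ) ^ d :=
      pow_le_pow_left₀ (by positivity) hγNm d
    nlinarith
  obtain ⟨k, -, hk⟩ := Finset.exists_le_of_sum_le Finset.univ_nonempty hlb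
  -- S k is nonempty
  have hpos : (0:ℝ) < ((S k).card : ℝ) := lt_of_lt_of_le (by positivity) hk
  have hne : (S k).Nonempty := Finset.card_pos.1 (by exact_mod_cast hpos)
  obtain ⟨y, hy⟩ := hne
  -- injection into bohr
  have hinj : (S k).card ≤ (bohr Γ γ).card := by
    apply Finset.card_le_card_of_injOn (fun x => x - y)
    · intro x hx
      simp only [S, Finset.mem_coe, Finset.mem_filter, Finset.mem_univ, true_and] at hx hy
      simp only [bohr, Finset.mem_coe, Finset.mem_filter, Finset.mem_univ, true_and]
      intro t ht
      have heq : t * (x - y) = (t * x - k ⟨t, ht⟩) - (t * y - k ⟨t, ht⟩) := by ring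
      rw [heq]
      exact dist_aux hγ _ _ (hx ⟨t, ht⟩) (hy ⟨t, ht⟩)
    · intro x₁ _ x₂ _ h
      simpa using sub_left_injective h
  calc γ ^ d * N ≤ ((S k).card : ℝ) := hk
    _ ≤ ((bohr Γ γ).card : ℝ) := by exact_mod_cast hinj
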